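/- arXiv:1102.5390 — 6 statements merged into one kernel-verified Lean document; each statement's English description precedes it below -/
import Mathlib

section
/- Let A be a J × n real matrix of full row rank J and let D be a kernel basis matrix of A. The relational model for intensities defined by D (log λ) = 0 is scale invariant — that is, for every t > 0 and every λ ∈ ℝ^n with strictly positive entries, D (log λ) = 0 implies D (log (t·λ)) = 0 — if and only if the all-ones vector 1 ∈ ℝ^n lies in the row space of A. -/
/-- Let `A` be a `J × n` real matrix of full row rank `J` and `D` a kernel
basis matrix of `A`.  The relational model for intensities `D (log λ) = 0` is scale
invariant — for every `t > 0` and strictly positive `λ`, `D (log λ) = 0` implies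
`D (log (t·λ)) = 0` — if and only if the all-ones vector lies in the row space of `A`. -/
theorem stmt4
    (J n : ℕ) (hJn : J < n)
    (A : Matrix (Fin J) (Fin n) ℝ)
    (hrank : A.rank = J)
    (D : Matrix (Fin (n - J)) (Fin n) ℝ)
    (hDindep : LinearIndependent ℝ (fun l => D l))
    (hDspan : Submodule.span ℝ (Set.range (fun l => D l)) = LinearMap.ker A.mulVecLin) :
    (∀ t : ℝ, 0 < t → ∀ lam : Fin n → ℝ, (∀ i, 0 < lam i) →
        D.mulVec (fun i => Real.log (lam i)) = 0 →
        D.mulVec (fun i => Real.log (t * lam i)) = 0) ↔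
      ∃ k : Fin J → ℝ, (fun _ => (1 : ℝ)) = A.transpose.mulVec k := by
  have hrowK : ∀ l, A.mulVec (D l) = 0 := by
    intro l
    have : D l ∈ LinearMap.ker A.mulVecLin := by
      rw [← hDspan]
      exact Submodule.subset_span ⟨l, rfl⟩
    simpa using this
  constructor
  · intro h
    set one : Fin n → ℝ := fun _ => (1 : ℝ) with hone
    have h1 : D.mulVec one = 0 := by
      have := h (Real.exp 1) (Real.exp_pos 1) (fun _ => 1) (fun _ => one_pos)
        (by ext l; simp [Matrix.mulVec])
      simpa [hone] using this
    -- every element of ker A is orthogonal to 1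
    have hKorth : ∀ x ∈ LinearMap.ker A.mulVecLin, dotProduct x one = 0 := by
      intro x hx
      rw [← hDspan] at hx
      induction hx using Submodule.span_induction with
      | mem y hy =>
        obtain ⟨l, rfl⟩ := hy
        have := congrFun h1 l
        simpa [Matrix.mulVec, hone] using this
      | zero => simp
      | add y z _ _ hy hz => simp [add_dotProduct, hy, hz]
      | smul c y _ hy => simp [smul_dotProduct, hy]
    -- row space
    set W : Submodule ℝ (Fin n → ℝ) := LinearMap.range A.transpose.mulVecLin with hW
    have hWorth : ∀ w ∈ W, ∀ x ∈ LinearMap.ker A.mulVecLin, dotProduct x w = 0 := by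
      rintro w ⟨k, rfl⟩ x hx
      have hxk : A.mulVec x = 0 := hx
      simp only [Matrix.mulVecLin_apply]
      rw [Matrix.dotProduct_mulVec, Matrix.vecMul_transpose, hxk, zero_dotProduct]
    set W' : Submodule ℝ (Fin n → ℝ) := W ⊔ Submodule.span ℝ {one} with hW'
    have hW'orth : ∀ w ∈ W', ∀ x ∈ LinearMap.ker A.mulVecLin, dotProduct x w = 0 := by
      intro w hw x hx
      rw [hW', Submodule.mem_sup] at hw
      obtain ⟨y, hy, z, hz, rfl⟩ := hw
      obtain ⟨c, rfl⟩ := Submodule.mem_span_singleton.mp hz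
      rw [dotProduct_add, hWorth y hy x hx, dotProduct_smul,
        hKorth x hx, smul_zero, add_zero]
    have hdisj : W' ⊓ LinearMap.ker A.mulVecLin = ⊥ := by
      rw [Submodule.eq_bot_iff]
      intro x hx
      exact dotProduct_self_eq_zero.mp (hW'orth x hx.1 x hx.2)
    -- dimensions
    have hrange : Module.finrank ℝ (LinearMap.range A.mulVecLin) = J := hrank
    have hKdim : Module.finrank ℝ (LinearMap.ker A.mulVecLin) + J = n := by
      have := LinearMap.finrank_range_add_finrank_ker A.mulVecLin
      rw [hrange, Module.finrank_fintype_fun_eq_card, Fintype.card_fin] at this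
      omega
    have hWdim : Module.finrank ℝ W = J := by
      have : A.transpose.rank = A.rank := Matrix.rank_transpose A
      rw [hrank] at this
      exact this
    have hsum := Submodule.finrank_sup_add_finrank_inf_eq W' (LinearMap.ker A.mulVecLin)
    rw [hdisj] at hsum
    have hle : Module.finrank ℝ (W' ⊔ LinearMap.ker A.mulVecLin : Submodule ℝ (Fin n → ℝ)) ≤ n := by
      have := Submodule.finrank_le (W' ⊔ LinearMap.ker A.mulVecLin : Submodule ℝ (Fin n → ℝ))
      rwa [Module.finrank_fintype_fun_eq_card, Fintype.card_fin] at this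
    have hW'le : Module.finrank ℝ W' ≤ J := by
      rw [finrank_bot, add_zero] at hsum
      omega
    have hWW' : W = W' := by
      refine Submodule.eq_of_le_of_finrank_le le_sup_left ?_
      rw [hWdim]; exact hW'le
    have hmem : one ∈ W := by
      rw [hWW']
      exact Submodule.mem_sup_right (Submodule.mem_span_singleton_self one)
    obtain ⟨k, hk⟩ := hmem
    exact ⟨k, hk.symm⟩
  · rintro ⟨k, hk⟩ t ht lam hlam hD0
    have hlog : (fun i => Real.log (t * lam i))
        = Real.log t • (fun _ => (1 : ℝ)) + fun i => Real.log (lam i) := by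
      funext i
      simp [Real.log_mul (ne_of_gt ht) (ne_of_gt (hlam i)), smul_eq_mul]
    rw [hlog, Matrix.mulVec_add, Matrix.mulVec_smul, hD0, add_zero, hk]
    have hz : D.mulVec (A.transpose.mulVec k) = 0 := by
      ext l
      have : D.mulVec (A.transpose.mulVec k) l = dotProduct (A.mulVec (D l)) k := by
        simp [Matrix.mulVec, Matrix.dotProduct_mulVec, Matrix.vecMul_transpose]
      rw [this, hrowK l, zero_dotProduct, Pi.zero_apply]
    rw [hz, smul_zero]
end

section
/- Let A be a J × n real matrix. If x, y ∈ ℝ^n have strictly positive entries, log x = Aᵀβ₁ and log y = Aᵀβ₂ for some β₁, β₂ ∈ ℝ^J, and A x = A y, then x = y. -/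
/-- Let `A` be a `J × n` real matrix.  If `x, y ∈ ℝ^n` are strictly positive,
`log x = Aᵀ β₁` and `log y = Aᵀ β₂` for some `β₁, β₂`, and `A x = A y`, then `x = y`. -/
theorem stmt5
    (J n : ℕ)
    (A : Matrix (Fin J) (Fin n) ℝ)
    (x y : Fin n → ℝ) (hx : ∀ i, 0 < x i) (hy : ∀ i, 0 < y i)
    (β₁ β₂ : Fin J → ℝ)
    (hβ₁ : (fun i => Real.log (x i)) = A.transpose.mulVec β₁)
    (hβ₂ : (fun i => Real.log (y i)) = A.transpose.mulVec β₂)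
    (hAxy : A.mulVec x = A.mulVec y) :
    x = y := by
  -- key sum is zero
  have hsum : ∑ i, (x i - y i) * (Real.log (x i) - Real.log (y i)) = 0 := by
    have hlog : ∀ i, Real.log (x i) - Real.log (y i)
        = ∑ j, A j i * (β₁ j - β₂ j) := by
      intro i
      have h1 := congrFun hβ₁ i
      have h2 := congrFun hβ₂ i
      simp only [Matrix.mulVec, dotProduct, Matrix.transpose_apply] at h1 h2
      rw [h1, h2, ← Finset.sum_sub_distrib]
      congr 1; ext j; ring
    calc ∑ i, (x i - y i) * (Real.log (x i) - Real.log (y i))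
        = ∑ i, ∑ j, (β₁ j - β₂ j) * (A j i * (x i - y i)) := by
          apply Finset.sum_congr rfl; intro i _
          rw [hlog i, Finset.mul_sum]
          apply Finset.sum_congr rfl; intro j _; ring
      _ = ∑ j, (β₁ j - β₂ j) * ∑ i, A j i * (x i - y i) := by
          rw [Finset.sum_comm]
          apply Finset.sum_congr rfl; intro j _
          rw [Finset.mul_sum]
      _ = 0 := by
          apply Finset.sum_eq_zero; intro j _
          have : ∑ i, A j i * (x i - y i) = 0 := by
            have h := congrFun hAxy j
            simp only [Matrix.mulVec, dotProduct] at h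
            rw [show (fun i => A j i * (x i - y i)) = fun i => A j i * x i - A j i * y i by
              ext i; ring]
            rw [Finset.sum_sub_distrib, h, sub_self]
          rw [this, mul_zero]
  -- each term is nonneg
  have hnn : ∀ i ∈ Finset.univ, 0 ≤ (x i - y i) * (Real.log (x i) - Real.log (y i)) := by
    intro i _
    rcases le_total (y i) (x i) with h | h
    · exact mul_nonneg (by linarith) (by
        have := Real.log_le_log (hy i) h; linarith)
    · have := Real.log_le_log (hx i) h
      nlinarith
  have hzero := (Finset.sum_eq_zero_iff_of_nonneg hnn).mp hsum
  funext i
  have hi := hzero i (Finset.mem_univ i)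
  by_contra hne
  rcases lt_or_gt_of_ne hne with h | h
  · have hl := Real.log_lt_log (hx i) h
    nlinarith
  · have hl := Real.log_lt_log (hy i) h
    nlinarith
end

section
/- Let A be a J × n real matrix of full row rank J such that the all-ones vector 1 ∈ ℝ^n lies in the row space of A. Let y ∈ ℝ^n have nonnegative entries with N = Σ_{i=1}^n y(i) > 0. Suppose λ ∈ ℝ^n has strictly positive entries with log λ = Aᵀβ₁ for some β₁ ∈ ℝ^J and A λ = A y (the Poisson likelihood equations), and suppose p ∈ ℝ^n has strictly positive entries with Σ_{i=1}^n p(i) = 1, log p = Aᵀβ₂ for some β₂ ∈ ℝ^J, and A y = α (A p) for some α ∈ ℝ (the multinomial likelihood equations with Lagrange multiplier α). Then α = N and λ = N·p; that is, the maximum likelihood estimates of the cell frequencies under the Poisson and multinomial models coincide. -/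
open Matrix


/-- Suppose `A` has full row rank `J` and the all-ones vector lies in its row
space.  Let `y ≥ 0` with `N = ∑ y i > 0`.  If `λ > 0` satisfies the Poisson likelihood
equations (`log λ = Aᵀβ₁`, `A λ = A y`) and `p > 0` satisfies the multinomial likelihood
equations (`∑ p = 1`, `log p = Aᵀβ₂`, `A y = α (A p)`), then `α = N` and `λ = N·p`. -/
theorem stmt6
    (J n : ℕ)
    (A : Matrix (Fin J) (Fin n) ℝ)
    (hrank : A.rank = J)
    (hone : ∃ k : Fin J → ℝ, (fun _ => (1 : ℝ)) = A.transpose.mulVec k)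
    (y : Fin n → ℝ) (hy : ∀ i, 0 ≤ y i)
    (N : ℝ) (hN : N = ∑ i, y i) (hNpos : 0 < N)
    (lam : Fin n → ℝ) (hlam : ∀ i, 0 < lam i)
    (β₁ : Fin J → ℝ) (hβ₁ : (fun i => Real.log (lam i)) = A.transpose.mulVec β₁)
    (hlamEq : A.mulVec lam = A.mulVec y)
    (p : Fin n → ℝ) (hp : ∀ i, 0 < p i) (hpsum : ∑ i, p i = 1)
    (β₂ : Fin J → ℝ) (hβ₂ : (fun i => Real.log (p i)) = A.transpose.mulVec β₂)
    (α : ℝ) (hpEq : A.mulVec y = α • A.mulVec p) :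
    α = N ∧ lam = N • p := by
  obtain ⟨k, hk⟩ := hone
  -- dotting the all-ones row-space vector with a vector x gives its sum
  have keydot : ∀ x : Fin n → ℝ, ∑ i, x i = k ⬝ᵥ A.mulVec x := by
    intro x
    have h1 : (fun _ => (1 : ℝ)) ⬝ᵥ x = ∑ i, x i := by
      simp [dotProduct]
    rw [← h1, hk, Matrix.mulVec_transpose, dotProduct_comm,
      Matrix.dotProduct_mulVec]
    rw [dotProduct_comm]
  have hsum_y : ∑ i, y i = k ⬝ᵥ A.mulVec y := keydot y
  have hsum_lam : ∑ i, lam i = k ⬝ᵥ A.mulVec lam := keydot lam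
  have hsum_p : ∑ i, p i = k ⬝ᵥ A.mulVec p := keydot p
  -- α = N
  have hαN : α = N := by
    have : k ⬝ᵥ A.mulVec y = α * (k ⬝ᵥ A.mulVec p) := by
      rw [hpEq, dotProduct_smul, smul_eq_mul]
    rw [← hsum_y, ← hsum_p, hpsum, mul_one] at this
    rw [hN, this]
  refine ⟨hαN, ?_⟩
  -- log (N • p) is also in the row space
  have hNp : ∀ i, 0 < N * p i := fun i => mul_pos hNpos (hp i)
  set c : Fin J → ℝ := β₁ - (Real.log N • k + β₂) with hc
  have hd : ∀ i, Real.log (lam i) - Real.log (N * p i) = A.transpose.mulVec c i := by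
    intro i
    have h1 : Real.log (lam i) = A.transpose.mulVec β₁ i := congrFun hβ₁ i
    have h2 : Real.log (p i) = A.transpose.mulVec β₂ i := congrFun hβ₂ i
    have h3 : (fun _ => (1 : ℝ)) i = A.transpose.mulVec k i := congrFun hk i
    have hlog : Real.log (N * p i) = Real.log N * A.transpose.mulVec k i
        + A.transpose.mulVec β₂ i := by
      rw [Real.log_mul (ne_of_gt hNpos) (ne_of_gt (hp i)), ← h2, ← h3, mul_one]
    rw [h1, hlog, hc]
    simp [Matrix.mulVec_sub, Matrix.mulVec_add, Matrix.mulVec_smul]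
  -- A lam = A (N • p)
  have hAeq : A.mulVec lam = A.mulVec (N • p) := by
    rw [hlamEq, hpEq, hαN, Matrix.mulVec_smul]
  -- the dot product of the log-difference with the difference vanishes
  have hdot : ∑ i, (Real.log (lam i) - Real.log (N * p i)) * (lam i - N * p i) = 0 := by
    have : (A.transpose.mulVec c) ⬝ᵥ (lam - N • p) = 0 := by
      rw [Matrix.mulVec_transpose, ← Matrix.dotProduct_mulVec, Matrix.mulVec_sub, hAeq,
        sub_self]
      simp
    rw [← this]
    simp only [dotProduct, Pi.sub_apply, Pi.smul_apply, smul_eq_mul]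
    exact Finset.sum_congr rfl fun i _ => by rw [hd i]
  -- each term is nonneg
  have hterm : ∀ i, 0 ≤ (Real.log (lam i) - Real.log (N * p i)) * (lam i - N * p i) := by
    intro i
    rcases lt_trichotomy (lam i) (N * p i) with h | h | h
    · have := Real.log_lt_log (hlam i) h
      exact le_of_lt (mul_pos_of_neg_of_neg (by linarith) (by linarith))
    · simp [h]
    · have := Real.log_lt_log (hNp i) h
      exact le_of_lt (mul_pos (by linarith) (by linarith))
  have hzero := (Finset.sum_eq_zero_iff_of_nonneg
    (fun i _ => hterm i)).mp hdot
  funext i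
  have hz := hzero i (Finset.mem_univ i)
  have : lam i = N * p i := by
    rcases lt_trichotomy (lam i) (N * p i) with h | h | h
    · have hl := Real.log_lt_log (hlam i) h
      nlinarith
    · exact h
    · have hl := Real.log_lt_log (hNp i) h
      nlinarith
  simpa using this
end

section
/- Let A be a J × n real matrix. Suppose λ, p ∈ ℝ^n have strictly positive entries, log λ = Aᵀβ₁ and log p = Aᵀβ₂ for some β₁, β₂ ∈ ℝ^J, and λ = N·p for a scalar N > 0 with N ≠ 1. Then the all-ones vector 1 ∈ ℝ^n lies in the row space of A. -/
/-- Let `A` be a `J × n` real matrix.  Suppose `λ, p > 0`,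
`log λ = Aᵀβ₁`, `log p = Aᵀβ₂`, and `λ = N·p` for a scalar `N > 0` with `N ≠ 1`.
Then the all-ones vector lies in the row space of `A`. -/
theorem stmt7
    (J n : ℕ)
    (A : Matrix (Fin J) (Fin n) ℝ)
    (lam p : Fin n → ℝ) (hlam : ∀ i, 0 < lam i) (hp : ∀ i, 0 < p i)
    (β₁ β₂ : Fin J → ℝ)
    (hβ₁ : (fun i => Real.log (lam i)) = A.transpose.mulVec β₁)
    (hβ₂ : (fun i => Real.log (p i)) = A.transpose.mulVec β₂)
    (N : ℝ) (hNpos : 0 < N) (hN1 : N ≠ 1)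
    (hNp : lam = N • p) :
    ∃ k : Fin J → ℝ, (fun _ => (1 : ℝ)) = A.transpose.mulVec k := by
  have hlogN : Real.log N ≠ 0 := Real.log_ne_zero_of_pos_of_ne_one hNpos hN1
  refine ⟨(Real.log N)⁻¹ • (β₁ - β₂), funext fun i => ?_⟩
  have h1 : Real.log (lam i) = Real.log N + Real.log (p i) := by
    rw [hNp]; simp [Real.log_mul (ne_of_gt hNpos) (ne_of_gt (hp i))]
  have h2 := congrFun hβ₁ i
  have h3 := congrFun hβ₂ i
  rw [Matrix.mulVec_smul, Matrix.mulVec_sub]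
  simp only [Pi.smul_apply, Pi.sub_apply, smul_eq_mul, ← h2, ← h3, h1]
  field_simp
  ring
end

section
/- Let A be a J × n matrix with entries in {0,1}, of full row rank J, such that no column of A is the zero vector and the all-ones vector 1 ∈ ℝ^n does not lie in the row space of A. Let y ∈ ℝ^n have nonnegative entries and set t = A y ∈ ℝ^J. Consider the set 𝒟 = {β ∈ ℝ^J : β_j ≤ 0 for all j, and Σ_{i=1}^n exp((Aᵀβ)_i) = 1}. Then there exists a unique β* ∈ 𝒟 such that Σ_j t_j β_j ≤ Σ_j t_j β*_j for all β ∈ 𝒟 if and only if every component of t is strictly positive. -/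
open Real Finset

lemma aux_inj {J n : ℕ} (A : Matrix (Fin J) (Fin n) ℝ) (hrank : A.rank = J) :
    Function.Injective (A.transpose.mulVec) := by
  have h1 : A.transpose.rank = J := by rw [Matrix.rank_transpose]; exact hrank
  rw [Matrix.rank] at h1
  have h2 := A.transpose.mulVecLin.finrank_range_add_finrank_ker
  rw [h1] at h2
  simp only [Module.finrank_fintype_fun_eq_card, Fintype.card_fin] at h2
  have hker : LinearMap.ker A.transpose.mulVecLin = ⊥ := by
    have : Module.finrank ℝ (LinearMap.ker A.transpose.mulVecLin) = 0 := by omega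
    exact Submodule.finrank_eq_zero.mp this
  have hki := LinearMap.ker_eq_bot.mp hker
  intro a b hab
  exact hki (by rw [Matrix.mulVecLin_apply, Matrix.mulVecLin_apply]; exact hab)

lemma aux_ivt {n : ℕ} (hn : 1 ≤ n) (w : Fin n → ℝ) (hw : ∑ i, Real.exp (w i) < 1) :
    ∃ l : ℝ, 0 ≤ l ∧ l < 1 ∧ ∑ i, Real.exp (l * w i) = 1 := by
  set g : ℝ → ℝ := fun l => ∑ i, Real.exp (l * w i) with hg
  have hcont : ContinuousOn g (Set.Icc 0 1) :=
    (continuous_finset_sum _ fun i _ =>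
      Real.continuous_exp.comp (continuous_id.mul continuous_const)).continuousOn
  have hg0 : g 0 = n := by simp [hg]
  have hg1 : g 1 < 1 := by simpa [hg] using hw
  have h1m : (1:ℝ) ∈ Set.Icc (g 1) (g 0) :=
    ⟨le_of_lt hg1, by rw [hg0]; exact_mod_cast hn⟩
  obtain ⟨l, hl, hgl⟩ := intermediate_value_Icc' (by norm_num : (0:ℝ) ≤ 1) hcont h1m
  refine ⟨l, hl.1, ?_, hgl⟩
  rcases lt_or_eq_of_le hl.2 with h | h
  · exact h
  · rw [h] at hgl; linarith

/-- Let `A` be a `J × n` 0-1 matrix of full row rank with no zero column such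
that the all-ones vector is not in the row space of `A`.  Let `y ≥ 0` and `t = A y`.  On
`𝒟 = {β : β ≤ 0, ∑ i exp((Aᵀβ)_i) = 1}` the linear functional `β ↦ ∑ j t_j β_j` has a
unique maximizer iff every component of `t` is strictly positive. -/
theorem stmt8
    (J n : ℕ)
    (A : Matrix (Fin J) (Fin n) ℝ)
    (h01 : ∀ j i, A j i = 0 ∨ A j i = 1)
    (hrank : A.rank = J)
    (hcol : ∀ i : Fin n, ∃ j : Fin J, A j i ≠ 0)
    (hone : ¬ ∃ k : Fin J → ℝ, (fun _ => (1 : ℝ)) = A.transpose.mulVec k)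
    (y : Fin n → ℝ) (hy : ∀ i, 0 ≤ y i)
    (t : Fin J → ℝ) (ht : t = A.mulVec y)
    (𝒟 : Set (Fin J → ℝ))
    (h𝒟 : 𝒟 = {β | (∀ j, β j ≤ 0) ∧ ∑ i, Real.exp (A.transpose.mulVec β i) = 1}) :
    (∃! βs : Fin J → ℝ, βs ∈ 𝒟 ∧ ∀ β ∈ 𝒟, ∑ j, t j * β j ≤ ∑ j, t j * βs j) ↔
      ∀ j, 0 < t j := by
  have hAnn : ∀ j i, 0 ≤ A j i := fun j i => by rcases h01 j i with h | h <;> simp [h]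
  have htnn : ∀ j, 0 ≤ t j := by
    intro j
    rw [ht]
    show 0 ≤ ∑ i, A j i * y i
    exact Finset.sum_nonneg fun i _ => mul_nonneg (hAnn j i) (hy i)
  have hinj := aux_inj A hrank
  have hT_single : ∀ j : Fin J, A.transpose.mulVec (Pi.single j 1) = A j := by
    intro j
    rw [Matrix.mulVec_single_one]
    rfl
  have hn2 : 2 ≤ n := by
    by_contra h
    push_neg at h
    interval_cases n
    · exact hone ⟨0, funext fun i => i.elim0⟩
    · obtain ⟨j, hj⟩ := hcol 0
      have hA1 : A j 0 = 1 := (h01 j 0).resolve_left hj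
      refine hone ⟨Pi.single j 1, ?_⟩
      rw [hT_single]
      funext i
      have : i = 0 := Subsingleton.elim _ _
      rw [this, hA1]
  have hmemD : ∀ β, β ∈ 𝒟 ↔
      (∀ j, β j ≤ 0) ∧ ∑ i, Real.exp (A.transpose.mulVec β i) = 1 := by
    intro β; rw [h𝒟]; rfl
  constructor
  · -- unique maximizer → all t positive
    rintro ⟨βs, ⟨hβsD, hmax⟩, huniq⟩ j0
    by_contra hle
    push_neg at hle
    have ht0 : t j0 = 0 := le_antisymm hle (htnn j0)
    obtain ⟨hβs_le, hβs_S⟩ := (hmemD βs).mp hβsD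
    set βc : Fin J → ℝ := βs - Pi.single j0 1 with hβc_def
    have hβc_apply : ∀ j, βc j = βs j - (Pi.single j0 (1:ℝ) : Fin J → ℝ) j := fun j => by
      rw [hβc_def, Pi.sub_apply]
    have hβc_j0 : βc j0 = βs j0 - 1 := by rw [hβc_apply]; simp
    have hβc_ne : ∀ j, j ≠ j0 → βc j = βs j := by
      intro j hj; rw [hβc_apply, Pi.single_eq_of_ne hj]; ring
    have hβc_le : ∀ j, βc j ≤ 0 := by
      intro j
      by_cases hj : j = j0
      · rw [hj, hβc_j0]; linarith [hβs_le j0]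
      · rw [hβc_ne j hj]; exact hβs_le j
    have hfβc : ∑ j, t j * βc j = ∑ j, t j * βs j := by
      refine Finset.sum_congr rfl fun j _ => ?_
      by_cases hj : j = j0
      · rw [hj, ht0]; ring
      · rw [hβc_ne j hj]
    have hTβc : ∀ i, A.transpose.mulVec βc i = A.transpose.mulVec βs i - A j0 i := by
      intro i
      rw [hβc_def, Matrix.mulVec_sub, hT_single]
      rfl
    have hSc_le : ∑ i, Real.exp (A.transpose.mulVec βc i) ≤ 1 := by
      rw [← hβs_S]
      refine Finset.sum_le_sum fun i _ => Real.exp_le_exp.mpr ?_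
      rw [hTβc]
      linarith [hAnn j0 i]
    rcases eq_or_lt_of_le hSc_le with hSc | hSc
    · -- βc is another maximizer
      have hβcD : βc ∈ 𝒟 := (hmemD βc).mpr ⟨hβc_le, hSc⟩
      have heq : βc = βs := huniq βc ⟨hβcD, fun β hβ => by rw [hfβc]; exact hmax β hβ⟩
      have := congrFun heq j0
      rw [hβc_j0] at this
      linarith
    · obtain ⟨l, hl0, hl1, hlS⟩ := aux_ivt (by omega) (A.transpose.mulVec βc) hSc
      set β' : Fin J → ℝ := l • βc with hβ'_def
      have hTβ' : ∀ i, A.transpose.mulVec β' i = l * A.transpose.mulVec βc i := by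
        intro i
        rw [hβ'_def, Matrix.mulVec_smul]
        rfl
      have hβ'D : β' ∈ 𝒟 := by
        refine (hmemD β').mpr ⟨fun j => mul_nonpos_of_nonneg_of_nonpos hl0 (hβc_le j), ?_⟩
        rw [Finset.sum_congr rfl fun i _ => by rw [hTβ' i]]
        exact hlS
      set m := ∑ j, t j * βs j with hm_def
      have hfβ' : ∑ j, t j * β' j = l * m := by
        rw [← hfβc, Finset.mul_sum]
        exact Finset.sum_congr rfl fun j _ => by
          show t j * (l * βc j) = l * (t j * βc j); ring
      have hm_le : m ≤ 0 :=
        Finset.sum_nonpos fun j _ => mul_nonpos_of_nonneg_of_nonpos (htnn j) (hβs_le j)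
      have h1 : l * m ≤ m := by rw [← hfβ']; exact hmax β' hβ'D
      have hm0 : m = 0 := by nlinarith
      have heq : β' = βs := by
        refine huniq β' ⟨hβ'D, fun β hβ => ?_⟩
        rw [hfβ', hm0, mul_zero]
        have h4 := hmax β hβ
        linarith [h4, hm0]
      have hzero : ∀ j, j ≠ j0 → βs j = 0 := by
        intro j hj
        have h2 := congrFun heq j
        have h3 : β' j = l * βc j := rfl
        rw [h3, hβc_ne j hj] at h2
        -- l * βs j = βs j with l < 1
        nlinarith [h2]
      have hTβs : ∀ i, A.transpose.mulVec βs i = A j0 i * βs j0 := by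
        intro i
        show ∑ j, A.transpose i j * βs j = A j0 i * βs j0
        rw [Finset.sum_eq_single j0]
        · rfl
        · intro b _ hb; rw [hzero b hb]; ring
        · intro hmem; exact absurd (Finset.mem_univ j0) hmem
      have hrow : ∀ i, A j0 i = 1 := by
        by_contra hcontra
        push_neg at hcontra
        obtain ⟨i0, hi0⟩ := hcontra
        have hi00 : A j0 i0 = 0 := (h01 j0 i0).resolve_right hi0
        have hterm : Real.exp (A.transpose.mulVec βs i0) = 1 := by
          rw [hTβs, hi00, zero_mul, Real.exp_zero]
        have hsplit : ∑ i, Real.exp (A.transpose.mulVec βs i) =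
            Real.exp (A.transpose.mulVec βs i0) +
              ∑ i ∈ Finset.univ.erase i0, Real.exp (A.transpose.mulVec βs i) :=
          (Finset.add_sum_erase _ _ (Finset.mem_univ i0)).symm
        have hpos : 0 < ∑ i ∈ Finset.univ.erase i0, Real.exp (A.transpose.mulVec βs i) := by
          refine Finset.sum_pos (fun i _ => Real.exp_pos _) ?_
          rw [← Finset.card_pos, Finset.card_erase_of_mem (Finset.mem_univ i0),
            Finset.card_univ, Fintype.card_fin]
          omega
        rw [hβs_S, hterm] at hsplit
        linarith
      exact hone ⟨Pi.single j0 1, by rw [hT_single]; funext i; rw [hrow i]⟩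
  · -- all t positive → unique maximizer
    intro htpos
    have hn1 : 1 ≤ n := by omega
    -- 𝒟 is nonempty
    have hs1 : ∀ i, (1:ℝ) ≤ ∑ j, A j i := by
      intro i
      obtain ⟨j1, hj1⟩ := hcol i
      have : A j1 i = 1 := (h01 j1 i).resolve_left hj1
      calc (1:ℝ) = A j1 i := this.symm
        _ ≤ ∑ j, A j i := Finset.single_le_sum (fun j _ => hAnn j i) (Finset.mem_univ j1)
    set g : ℝ → ℝ := fun c => ∑ i, Real.exp (c * ∑ j, A j i) with hg_def
    have hgcont : ContinuousOn g (Set.Icc (-(n:ℝ)) 0) :=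
      (continuous_finset_sum _ fun i _ =>
        Real.continuous_exp.comp (continuous_id.mul continuous_const)).continuousOn
    have hg0 : g 0 = n := by simp [hg_def]
    have hgneg : g (-(n:ℝ)) < 1 := by
      have hexpn : (n:ℝ) + 1 ≤ Real.exp n := Real.add_one_le_exp _
      have hbound : ∀ i : Fin n, Real.exp (-(n:ℝ) * ∑ j, A j i) ≤ Real.exp (-(n:ℝ)) := by
        intro i
        apply Real.exp_le_exp.mpr
        nlinarith [hs1 i]
      calc g (-(n:ℝ)) ≤ ∑ _i : Fin n, Real.exp (-(n:ℝ)) :=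
            Finset.sum_le_sum fun i _ => hbound i
        _ = n * Real.exp (-(n:ℝ)) := by rw [Finset.sum_const, Finset.card_univ,
            Fintype.card_fin, nsmul_eq_mul]
        _ < 1 := by
            rw [Real.exp_neg]
            rw [mul_inv_lt_iff₀ (Real.exp_pos _), one_mul]
            linarith
    have h1mem : (1:ℝ) ∈ Set.Icc (g (-(n:ℝ))) (g 0) := by
      constructor
      · linarith
      · rw [hg0]; exact_mod_cast hn1
    obtain ⟨c, hc_mem, hgc⟩ := intermediate_value_Icc
      (neg_nonpos.mpr (Nat.cast_nonneg n) : -(n:ℝ) ≤ 0) hgcont h1mem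
    set β₀ : Fin J → ℝ := fun _ => c with hβ₀_def
    have hTβ₀ : ∀ i, A.transpose.mulVec β₀ i = c * ∑ j, A j i := by
      intro i
      show ∑ j, A.transpose i j * c = c * ∑ j, A j i
      rw [Finset.mul_sum]
      exact Finset.sum_congr rfl fun j _ => by
        show A j i * c = c * A j i; ring
    have hβ₀D : β₀ ∈ 𝒟 := by
      refine (hmemD β₀).mpr ⟨fun j => hc_mem.2, ?_⟩
      rw [Finset.sum_congr rfl fun i _ => by rw [hTβ₀ i]]
      exact hgc
    set f : (Fin J → ℝ) → ℝ := fun β => ∑ j, t j * β j with hf_def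
    have hfcont : Continuous f :=
      continuous_finset_sum _ fun j _ => continuous_const.mul (continuous_apply j)
    set m0 := f β₀ with hm0_def
    set K : Set (Fin J → ℝ) := 𝒟 ∩ {β | m0 ≤ f β} with hK_def
    have hSumcont : Continuous fun β => ∑ i, Real.exp (A.transpose.mulVec β i) := by
      refine continuous_finset_sum _ fun i _ => Real.continuous_exp.comp ?_
      exact continuous_finset_sum Finset.univ
        (fun j (_ : j ∈ Finset.univ) =>
          continuous_const.mul (continuous_apply j) :
          ∀ j ∈ Finset.univ, Continuous fun β : Fin J → ℝ => A.transpose i j * β j)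
    have hDclosed : IsClosed 𝒟 := by
      rw [h𝒟]
      have : {β : Fin J → ℝ | (∀ j, β j ≤ 0) ∧
          ∑ i, Real.exp (A.transpose.mulVec β i) = 1} =
          (⋂ j, {β : Fin J → ℝ | β j ≤ 0}) ∩
            ((fun β => ∑ i, Real.exp (A.transpose.mulVec β i)) ⁻¹' {1}) := by
        ext β; simp [Set.mem_iInter]
      rw [this]
      exact IsClosed.inter
        (isClosed_iInter fun j => isClosed_le (continuous_apply j) continuous_const)
        (IsClosed.preimage hSumcont isClosed_singleton)
    have hKclosed : IsClosed K :=
      hDclosed.inter (isClosed_le continuous_const hfcont)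
    have hKsub : K ⊆ Set.Icc (fun j => m0 / t j) (0 : Fin J → ℝ) := by
      rintro β ⟨hβD, hβf⟩
      obtain ⟨hβle, -⟩ := (hmemD β).mp hβD
      constructor
      · intro j
        have hsplit : f β = t j * β j + ∑ k ∈ Finset.univ.erase j, t k * β k :=
          (Finset.add_sum_erase _ _ (Finset.mem_univ j)).symm
        have hrest : ∑ k ∈ Finset.univ.erase j, t k * β k ≤ 0 :=
          Finset.sum_nonpos fun k _ => mul_nonpos_of_nonneg_of_nonpos (htnn k) (hβle k)
        have hβf' : m0 ≤ f β := hβf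
        have hm0le : m0 ≤ t j * β j := by linarith [hsplit ▸ hβf']
        rw [div_le_iff₀ (htpos j)]
        nlinarith [hm0le]
      · intro j; exact hβle j
    have hKcpt : IsCompact K := IsCompact.of_isClosed_subset isCompact_Icc hKclosed hKsub
    have hKne : β₀ ∈ K := ⟨hβ₀D, le_refl m0⟩
    obtain ⟨βs, hβsK, hβsmax⟩ := hKcpt.exists_isMaxOn ⟨β₀, hKne⟩ hfcont.continuousOn
    have hglobal : ∀ β ∈ 𝒟, f β ≤ f βs := by
      intro β hβ
      by_cases hb : m0 ≤ f β
      · exact hβsmax ⟨hβ, hb⟩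
      · push_neg at hb
        have h2 : f β₀ ≤ f βs := hβsmax hKne
        linarith [hm0_def, h2]
    refine ⟨βs, ⟨hβsK.1, hglobal⟩, ?_⟩
    -- uniqueness
    rintro β2 ⟨hβ2D, hβ2max⟩
    by_contra hne
    obtain ⟨hβs_le, hβs_S⟩ := (hmemD βs).mp hβsK.1
    obtain ⟨hβ2_le, hβ2_S⟩ := (hmemD β2).mp hβ2D
    have hm_eq : f β2 = f βs := le_antisymm (hglobal β2 hβ2D) (hβ2max βs hβsK.1)
    set m := f βs with hm_def
    have hm_le : m ≤ 0 :=
      Finset.sum_nonpos fun j _ => mul_nonpos_of_nonneg_of_nonpos (htnn j) (hβs_le j)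
    have hm_lt : m < 0 := by
      rcases lt_or_eq_of_le hm_le with h | h
      · exact h
      · exfalso
        have hzs : ∀ j, βs j = 0 := by
          intro j
          have hall := (Finset.sum_eq_zero_iff_of_nonpos
            (fun k (_ : k ∈ Finset.univ) =>
              mul_nonpos_of_nonneg_of_nonpos (htnn k) (hβs_le k))).mp h
          have := hall j (Finset.mem_univ j)
          exact (mul_eq_zero.mp this).resolve_left (ne_of_gt (htpos j))
        have hz2 : ∀ j, β2 j = 0 := by
          intro j
          have h2 : f β2 = 0 := by rw [hm_eq]; exact h
          have hall := (Finset.sum_eq_zero_iff_of_nonpos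
            (fun k (_ : k ∈ Finset.univ) =>
              mul_nonpos_of_nonneg_of_nonpos (htnn k) (hβ2_le k))).mp h2
          have := hall j (Finset.mem_univ j)
          exact (mul_eq_zero.mp this).resolve_left (ne_of_gt (htpos j))
        exact hne (funext fun j => by rw [hzs j, hz2 j])
    set u := A.transpose.mulVec βs with hu_def
    set v := A.transpose.mulVec β2 with hv_def
    have huv : u ≠ v := fun h => hne (hinj h).symm
    obtain ⟨i0, hi0⟩ := Function.ne_iff.mp huv
    set βm : Fin J → ℝ := (2⁻¹ : ℝ) • (βs + β2) with hβm_def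
    have hTβm : ∀ i, A.transpose.mulVec βm i = (u i + v i) / 2 := by
      intro i
      rw [hβm_def, Matrix.mulVec_smul, Matrix.mulVec_add]
      show (2⁻¹ : ℝ) * (u i + v i) = (u i + v i) / 2
      ring
    have hkey : ∀ i, Real.exp ((u i + v i) / 2) ≤ (Real.exp (u i) + Real.exp (v i)) / 2 := by
      intro i
      have := convexOn_exp.2 (Set.mem_univ (u i)) (Set.mem_univ (v i))
        (by norm_num : (0:ℝ) ≤ 1/2) (by norm_num : (0:ℝ) ≤ 1/2) (by norm_num)
      simp only [smul_eq_mul] at this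
      calc Real.exp ((u i + v i) / 2) = Real.exp (1/2 * u i + 1/2 * v i) := by ring_nf
        _ ≤ 1/2 * Real.exp (u i) + 1/2 * Real.exp (v i) := this
        _ = (Real.exp (u i) + Real.exp (v i)) / 2 := by ring
    have hkey0 : Real.exp ((u i0 + v i0) / 2) < (Real.exp (u i0) + Real.exp (v i0)) / 2 := by
      have := strictConvexOn_exp.2 (Set.mem_univ (u i0)) (Set.mem_univ (v i0)) hi0
        (by norm_num : (0:ℝ) < 1/2) (by norm_num : (0:ℝ) < 1/2) (by norm_num)
      simp only [smul_eq_mul] at this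
      calc Real.exp ((u i0 + v i0) / 2) = Real.exp (1/2 * u i0 + 1/2 * v i0) := by ring_nf
        _ < 1/2 * Real.exp (u i0) + 1/2 * Real.exp (v i0) := this
        _ = (Real.exp (u i0) + Real.exp (v i0)) / 2 := by ring
    have hSm : ∑ i, Real.exp (A.transpose.mulVec βm i) < 1 := by
      have h1 : ∑ i, Real.exp (A.transpose.mulVec βm i) =
          ∑ i, Real.exp ((u i + v i) / 2) :=
        Finset.sum_congr rfl fun i _ => by rw [hTβm i]
      have h2 : ∑ i, Real.exp ((u i + v i) / 2) <
          ∑ i, (Real.exp (u i) + Real.exp (v i)) / 2 :=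
        Finset.sum_lt_sum (fun i _ => hkey i) ⟨i0, Finset.mem_univ i0, hkey0⟩
      have h3 : ∑ i, (Real.exp (u i) + Real.exp (v i)) / 2 = 1 := by
        rw [← Finset.sum_div, Finset.sum_add_distrib, hβs_S, hβ2_S]
        norm_num
      rw [h1]
      linarith
    obtain ⟨l, hl0, hl1, hlS⟩ := aux_ivt hn1 (A.transpose.mulVec βm) hSm
    set β' : Fin J → ℝ := l • βm with hβ'_def
    have hβm_le : ∀ j, βm j ≤ 0 := by
      intro j
      show (2⁻¹ : ℝ) * (βs j + β2 j) ≤ 0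
      have := hβs_le j
      have := hβ2_le j
      nlinarith
    have hβ'D : β' ∈ 𝒟 := by
      refine (hmemD β').mpr ⟨fun j => mul_nonpos_of_nonneg_of_nonpos hl0 (hβm_le j), ?_⟩
      have : ∀ i, A.transpose.mulVec β' i = l * A.transpose.mulVec βm i := by
        intro i
        rw [hβ'_def, Matrix.mulVec_smul]
        rfl
      rw [Finset.sum_congr rfl fun i _ => by rw [this i]]
      exact hlS
    have hfβm : f βm = m := by
      have hterm : ∀ j, t j * βm j = (t j * βs j + t j * β2 j) / 2 := by
        intro j
        show t j * ((2⁻¹ : ℝ) * (βs j + β2 j)) = _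
        ring
      have hms : ∑ j, t j * βs j = m := hm_def.symm
      have hm2 : ∑ j, t j * β2 j = m := hm_eq
      show ∑ j, t j * βm j = m
      rw [Finset.sum_congr rfl fun j _ => hterm j, ← Finset.sum_div,
        Finset.sum_add_distrib, hms, hm2]
      ring
    have hfβ' : f β' = l * m := by
      rw [← hfβm]
      show ∑ j, t j * β' j = l * ∑ j, t j * βm j
      rw [Finset.mul_sum]
      exact Finset.sum_congr rfl fun j _ => by
        show t j * (l * βm j) = l * (t j * βm j); ring
    have := hglobal β' hβ'D
    rw [hfβ'] at this
    nlinarith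
end

section
/- Let A be a J × n matrix with nonnegative integer entries and full row rank J, and let D be a kernel basis matrix of A. For any vectors δ₁, δ₂ ∈ ℝ^n, each with strictly positive entries summing to 1, there exist a vector δ ∈ ℝ^n with strictly positive entries summing to 1 and a scalar α such that A δ = α (A δ₁) and D (log δ) = D (log δ₂). Moreover, if the all-ones vector 1 ∈ ℝ^n lies in the row space of A, then necessarily α = 1, i.e., A δ = A δ₁. -/
open Matrix

lemma inj_of_rank (J n : ℕ) (A : Matrix (Fin J) (Fin n) ℝ) (hrank : A.rank = J) :
    ∀ d : Fin J → ℝ, A.transpose.mulVec d = 0 → d = 0 := by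
  have h1 : Aᵀ.rank = J := by rw [Matrix.rank_transpose]; exact hrank
  have h2 := LinearMap.finrank_range_add_finrank_ker (Aᵀ.mulVecLin)
  have h3 : Module.finrank ℝ (LinearMap.ker Aᵀ.mulVecLin) = 0 := by
    have h0 : Aᵀ.rank = Module.finrank ℝ (LinearMap.range Aᵀ.mulVecLin) := rfl
    rw [← h0, h1, Module.finrank_pi, Fintype.card_fin] at h2
    omega
  have h4 : LinearMap.ker Aᵀ.mulVecLin = ⊥ := Submodule.finrank_eq_zero.mp h3
  intro d hd
  have hmem : d ∈ LinearMap.ker Aᵀ.mulVecLin := by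
    rw [LinearMap.mem_ker, Matrix.mulVecLin_apply]; exact hd
  rw [h4] at hmem
  simpa using hmem
open Matrix Real Finset

lemma exists_theta (J n : ℕ) (hJ : 0 < J) (A : Matrix (Fin J) (Fin n) ℝ)
    (hA0 : ∀ j i, 0 ≤ A j i)
    (hinj : ∀ d : Fin J → ℝ, A.transpose.mulVec d = 0 → d = 0)
    (δ₁ δ₂ : Fin n → ℝ) (hδ₁ : ∀ i, 0 < δ₁ i) (hδ₁sum : ∑ i, δ₁ i = 1)
    (hδ₂ : ∀ i, 0 < δ₂ i) (hδ₂sum : ∑ i, δ₂ i = 1) :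
    ∃ (θ : Fin J → ℝ) (α : ℝ),
      (∑ i, δ₂ i * Real.exp (∑ j, A j i * θ j)) = 1 ∧
      A.mulVec (fun i => δ₂ i * Real.exp (∑ j, A j i * θ j)) = α • A.mulVec δ₁ := by
  -- basic objects
  set g : (Fin J → ℝ) → Fin n → ℝ := fun θ i => ∑ j, A j i * θ j with hgdef
  set f : (Fin J → ℝ) → ℝ := fun θ => ∑ i, δ₂ i * Real.exp (g θ i) with hfdef
  set b : Fin J → ℝ := fun j => ∑ i, A j i * δ₁ i with hbdef
  set dotb : (Fin J → ℝ) → ℝ := fun θ => ∑ j, b j * θ j with hdotdef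
  -- transpose mulVec is g
  have hgT : ∀ θ i, A.transpose.mulVec θ i = g θ i := by
    intro θ i
    simp [Matrix.mulVec, dotProduct, Matrix.transpose_apply, hgdef]
  -- rows are nonzero, b positive
  have hrow : ∀ j : Fin J, ∃ i, 0 < A j i := by
    intro j
    by_contra hcon
    push_neg at hcon
    have hz : ∀ i, A j i = 0 := fun i => le_antisymm (hcon i) (hA0 j i)
    have h0 : A.transpose.mulVec (Pi.single j 1) = 0 := by
      funext i
      rw [hgT]
      simp [hgdef, Pi.single_apply]
      exact hz i
    have := hinj _ h0
    have h1 : (Pi.single j 1 : Fin J → ℝ) j = 1 := by simp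
    rw [this] at h1
    simp at h1
  have hb : ∀ j, 0 < b j := by
    intro j
    obtain ⟨i0, hi0⟩ := hrow j
    refine Finset.sum_pos' (fun i _ => mul_nonneg (hA0 j i) (hδ₁ i).le) ⟨i0, Finset.mem_univ _, ?_⟩
    exact mul_pos hi0 (hδ₁ i0)
  -- norm-squared of b, direction v, exponents c
  set B : ℝ := ∑ j, b j * b j with hBdef
  have hB : 0 < B := Finset.sum_pos (fun j _ => mul_pos (hb j) (hb j))
    ⟨⟨0, hJ⟩, Finset.mem_univ _⟩
  set v : Fin J → ℝ := fun j => b j / B with hvdef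
  have hv : ∀ j, 0 < v j := fun j => div_pos (hb j) hB
  have hdotv : dotb v = 1 := by
    rw [hdotdef]
    simp only [hvdef]
    rw [show (∑ j, b j * (b j / B)) = (∑ j, b j * b j) / B by
      rw [Finset.sum_div]; exact Finset.sum_congr rfl (fun j _ => (mul_div_assoc _ _ _).symm)]
    rw [← hBdef, div_self hB.ne']
  set c : Fin n → ℝ := fun i => g v i with hcdef
  have hc : ∀ i, 0 ≤ c i := by
    intro i
    exact Finset.sum_nonneg (fun j _ => mul_nonneg (hA0 j i) (hv j).le)
  set C : ℝ := 1 + ∑ i, c i with hCdef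
  have hC : 0 < C := by
    have := Finset.sum_nonneg (fun i (_ : i ∈ Finset.univ) => hc i)
    rw [hCdef]; linarith
  have hcC : ∀ i, c i ≤ C := by
    intro i
    have h1 : c i ≤ ∑ i', c i' :=
      Finset.single_le_sum (fun i' _ => hc i') (Finset.mem_univ i)
    rw [hCdef]; linarith
  -- linearity facts
  have hglin : ∀ (θ d : Fin J → ℝ) (t : ℝ) (i : Fin n), g (θ + t • d) i = g θ i + t * g d i := by
    intro θ d t i
    simp only [hgdef, Pi.add_apply, Pi.smul_apply, smul_eq_mul, mul_add, Finset.sum_add_distrib,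
      Finset.mul_sum]
    ring_nf
    congr 1
    exact Finset.sum_congr rfl (fun j _ => by ring)
  have hdlin : ∀ (θ d : Fin J → ℝ) (t : ℝ), dotb (θ + t • d) = dotb θ + t * dotb d := by
    intro θ d t
    simp only [hdotdef, Pi.add_apply, Pi.smul_apply, smul_eq_mul, mul_add, Finset.sum_add_distrib,
      Finset.mul_sum]
    congr 1
    exact Finset.sum_congr rfl (fun j _ => by ring)
  have hgsmul : ∀ (r : ℝ) (d : Fin J → ℝ) (i : Fin n), g (r • d) i = r * g d i := by
    intro r d i
    simp only [hgdef, Pi.smul_apply, smul_eq_mul, Finset.mul_sum]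
    exact Finset.sum_congr rfl (fun j _ => by ring)
  have hdsmul : ∀ (r : ℝ) (d : Fin J → ℝ), dotb (r • d) = r * dotb d := by
    intro r d
    simp only [hdotdef, Pi.smul_apply, smul_eq_mul, Finset.mul_sum]
    exact Finset.sum_congr rfl (fun j _ => by ring)
  -- swap: dotb θ = ∑ i, δ₁ i * g θ i
  have hswap : ∀ θ, dotb θ = ∑ i, δ₁ i * g θ i := by
    intro θ
    rw [hdotdef, hgdef]
    simp only [hbdef, Finset.sum_mul, Finset.mul_sum]
    rw [Finset.sum_comm]
    refine Finset.sum_congr rfl (fun i _ => Finset.sum_congr rfl (fun j _ => by ring))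
  -- the slice infimum function
  set Sl : ℝ → Set (Fin J → ℝ) := fun u => {θ | dotb θ = u} with hSldef
  set h : ℝ → ℝ := fun u => sInf (f '' Sl u) with hhdef
  have hmemSl : ∀ u : ℝ, (u • v) ∈ Sl u := by
    intro u
    simp only [hSldef, Set.mem_setOf_eq]
    rw [hdsmul, hdotv, mul_one]
  have hne : ∀ u : ℝ, (f '' Sl u).Nonempty := fun u => ⟨f (u • v), ⟨u • v, hmemSl u, rfl⟩⟩
  have hfpos : ∀ θ, 0 ≤ f θ := by
    intro θ
    exact Finset.sum_nonneg (fun i _ => mul_nonneg (hδ₂ i).le (Real.exp_pos _).le)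
  have hbdd : ∀ u : ℝ, BddBelow (f '' Sl u) := by
    intro u
    exact ⟨0, by rintro y ⟨θ, hθ, rfl⟩; exact hfpos θ⟩
  have hh0 : ∀ u, 0 ≤ h u := by
    intro u
    exact le_csInf (hne u) (by rintro y ⟨θ, hθ, rfl⟩; exact hfpos θ)
  -- shift estimate
  have hsh : ∀ (u ε : ℝ), h (u + ε) ≤ Real.exp (|ε| * C) * h u := by
    intro u ε
    have hK : 0 < Real.exp (|ε| * C) := Real.exp_pos _
    have key : ∀ θ, dotb θ = u → h (u + ε) ≤ Real.exp (|ε| * C) * f θ := by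
      intro θ hθ
      have hmem : f (θ + ε • v) ∈ f '' Sl (u + ε) :=
        ⟨θ + ε • v, by simp only [hSldef, Set.mem_setOf_eq]; rw [hdlin, hθ, hdotv, mul_one], rfl⟩
      have h1 : h (u + ε) ≤ f (θ + ε • v) := csInf_le (hbdd _) hmem
      have h2 : f (θ + ε • v) ≤ Real.exp (|ε| * C) * f θ := by
        rw [hfdef]
        simp only [Finset.mul_sum]
        apply Finset.sum_le_sum
        intro i _
        have hgi : g (θ + ε • v) i = g θ i + ε * c i := hglin θ v ε i
        rw [hgi, Real.exp_add]
        have hε1 : ε * c i ≤ |ε| * C :=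
          le_trans (mul_le_mul_of_nonneg_right (le_abs_self ε) (hc i))
            (mul_le_mul_of_nonneg_left (hcC i) (abs_nonneg ε))
        have hε2 : Real.exp (ε * c i) ≤ Real.exp (|ε| * C) := Real.exp_le_exp.mpr hε1
        calc δ₂ i * (Real.exp (g θ i) * Real.exp (ε * c i))
            ≤ δ₂ i * (Real.exp (g θ i) * Real.exp (|ε| * C)) := by
              apply mul_le_mul_of_nonneg_left _ (hδ₂ i).le
              exact mul_le_mul_of_nonneg_left hε2 (Real.exp_pos _).le
          _ = Real.exp (|ε| * C) * (δ₂ i * Real.exp (g θ i)) := by ring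
      linarith
    have h3 : h (u + ε) / Real.exp (|ε| * C) ≤ h u := by
      apply le_csInf (hne u)
      rintro y ⟨θ, hθ, rfl⟩
      rw [div_le_iff₀ hK, mul_comm]
      exact key θ hθ
    rw [div_le_iff₀ hK] at h3
    linarith [h3]
  -- continuity of h
  have hcont : Continuous h := by
    rw [continuous_iff_continuousAt]
    intro u
    have hcexp : Continuous fun w : ℝ => Real.exp (|w - u| * C) :=
      Real.continuous_exp.comp ((continuous_abs.comp (continuous_id.sub continuous_const)).mul
        continuous_const)
    have hup : ∀ w, h w ≤ Real.exp (|w - u| * C) * h u := by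
      intro w
      have := hsh u (w - u)
      rwa [add_sub_cancel] at this
    have hlo : ∀ w, h u / Real.exp (|w - u| * C) ≤ h w := by
      intro w
      have := hsh w (u - w)
      rw [add_sub_cancel] at this
      rw [div_le_iff₀ (Real.exp_pos _)]
      rw [abs_sub_comm u w] at this
      linarith
    have t1 : Filter.Tendsto (fun w => h u / Real.exp (|w - u| * C)) (nhds u) (nhds (h u)) := by
      have : Continuous fun w => h u / Real.exp (|w - u| * C) :=
        continuous_const.div hcexp (fun w => (Real.exp_pos _).ne')
      have h4 := this.tendsto u
      simpa using h4
    have t2 : Filter.Tendsto (fun w => Real.exp (|w - u| * C) * h u) (nhds u) (nhds (h u)) := by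
      have : Continuous fun w => Real.exp (|w - u| * C) * h u := hcexp.mul continuous_const
      have h4 := this.tendsto u
      simpa using h4
    exact tendsto_of_tendsto_of_tendsto_of_le_of_le t1 t2 hlo hup
  -- nonemptiness of Fin n and a good column
  obtain ⟨i₀, hi₀⟩ := hrow ⟨0, hJ⟩
  have hne_n : (Finset.univ : Finset (Fin n)).Nonempty := ⟨i₀, Finset.mem_univ _⟩
  have hci₀ : 0 < c i₀ := by
    rw [hcdef]
    exact Finset.sum_pos' (fun j _ => mul_nonneg (hA0 j i₀) (hv j).le)
      ⟨⟨0, hJ⟩, Finset.mem_univ _, mul_pos hi₀ (hv _)⟩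
  -- lower bound point u₁ where h ≥ 1
  set δm : ℝ := Finset.univ.inf' hne_n δ₂ with hδmdef
  have hδm : 0 < δm := by
    rw [hδmdef, Finset.lt_inf'_iff]
    exact fun i _ => hδ₂ i
  have hδmle : ∀ i, δm ≤ δ₂ i := fun i => Finset.inf'_le _ (Finset.mem_univ i)
  set u₁ : ℝ := Real.log δm⁻¹ with hu₁def
  have hh1 : 1 ≤ h u₁ := by
    apply le_csInf (hne u₁)
    rintro y ⟨θ, hθ, rfl⟩
    rw [hSldef, Set.mem_setOf_eq] at hθ
    have hex : ∃ i, u₁ ≤ g θ i := by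
      by_contra hall
      push_neg at hall
      have hlt : dotb θ < u₁ := by
        rw [hswap θ]
        calc ∑ i, δ₁ i * g θ i < ∑ i, δ₁ i * u₁ :=
              Finset.sum_lt_sum_of_nonempty hne_n (fun i _ => (mul_lt_mul_iff_right₀ (hδ₁ i)).mpr (hall i))
          _ = (∑ i, δ₁ i) * u₁ := by rw [Finset.sum_mul]
          _ = u₁ := by rw [hδ₁sum, one_mul]
      rw [hθ] at hlt
      exact lt_irrefl _ hlt
    obtain ⟨i, hi⟩ := hex
    have h1 : δ₂ i * Real.exp (g θ i) ≤ f θ := by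
      rw [hfdef]
      exact Finset.single_le_sum (fun i' _ => mul_nonneg (hδ₂ i').le (Real.exp_pos _).le)
        (Finset.mem_univ i)
    have h2 : (1 : ℝ) ≤ δ₂ i * Real.exp (g θ i) := by
      have h3 : δm * Real.exp u₁ ≤ δ₂ i * Real.exp (g θ i) :=
        mul_le_mul (hδmle i) (Real.exp_le_exp.mpr hi) (Real.exp_pos _).le (hδ₂ i).le
      rw [hu₁def, Real.exp_log (inv_pos.mpr hδm), mul_inv_cancel₀ hδm.ne'] at h3
      exact h3
    linarith
  -- upper bound point u₀ where h < 1
  set t : Fin n → ℝ := fun i => if c i = 0 then δ₂ i else 0 with htdef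
  set σ : ℝ := ∑ i, t i with hσdef
  have hσ : σ < 1 := by
    rw [hσdef, ← hδ₂sum]
    apply Finset.sum_lt_sum
    · intro i _
      rw [htdef]
      by_cases hci : c i = 0
      · simp [hci]
      · simp [hci, (hδ₂ i).le]
    · exact ⟨i₀, Finset.mem_univ _, by rw [htdef]; simp [hci₀.ne']; exact hδ₂ i₀⟩
  have htend : Filter.Tendsto (fun u : ℝ => f (u • v)) Filter.atBot (nhds σ) := by
    have hfu : ∀ u : ℝ, f (u • v) = ∑ i, δ₂ i * Real.exp (u * c i) := by
      intro u
      rw [hfdef]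
      exact Finset.sum_congr rfl (fun i _ => by rw [hgsmul])
    simp only [hfu, hσdef]
    apply tendsto_finset_sum
    intro i _
    by_cases hci : c i = 0
    · simp only [hci, mul_zero, Real.exp_zero, mul_one, htdef, if_pos hci]
      exact tendsto_const_nhds
    · have hcpos : 0 < c i := lt_of_le_of_ne (hc i) (Ne.symm hci)
      have h5 : Filter.Tendsto (fun u : ℝ => u * c i) Filter.atBot Filter.atBot :=
        Filter.Tendsto.atBot_mul_const hcpos Filter.tendsto_id
      have h6 : Filter.Tendsto (fun u : ℝ => Real.exp (u * c i)) Filter.atBot (nhds 0) :=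
        Real.tendsto_exp_atBot.comp h5
      have h7 := h6.const_mul (δ₂ i)
      rw [mul_zero] at h7
      simpa only [htdef, if_neg hci] using h7
  have hev : ∀ᶠ u in Filter.atBot, f (u • v) < 1 ∧ u ≤ u₁ - 1 :=
    (htend.eventually_lt_const hσ).and (Filter.eventually_le_atBot (u₁ - 1))
  obtain ⟨u₀, hu₀lt, hu₀le⟩ := hev.exists
  have hh0' : h u₀ < 1 :=
    lt_of_le_of_lt (csInf_le (hbdd _) ⟨u₀ • v, hmemSl u₀, rfl⟩) hu₀lt
  have hu01 : u₀ < u₁ := by linarith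
  -- IVT : find ustar with h ustar = 1
  have hIVT := intermediate_value_Icc hu01.le hcont.continuousOn
  have h1mem : (1 : ℝ) ∈ Set.Icc (h u₀) (h u₁) := ⟨hh0'.le, hh1⟩
  obtain ⟨ustar, hustarmem, hustar⟩ := hIVT h1mem
  -- continuity of f, dotb, and the gauge φ
  have hgcont : ∀ i, Continuous fun θ => g θ i := by
    intro i
    rw [hgdef]
    exact continuous_finset_sum _ (fun j _ => continuous_const.mul (continuous_apply j))
  have hfcont : Continuous f := by
    rw [hfdef]
    exact continuous_finset_sum _
      (fun i _ => continuous_const.mul (Real.continuous_exp.comp (hgcont i)))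
  have hdcont : Continuous dotb := by
    rw [hdotdef]
    exact continuous_finset_sum _ (fun j _ => continuous_const.mul (continuous_apply j))
  set φ : (Fin J → ℝ) → ℝ := fun d => |dotb d| + ∑ i, max (g d i) 0 with hφdef
  have hφcont : Continuous φ := by
    rw [hφdef]
    exact (continuous_abs.comp hdcont).add
      (continuous_finset_sum _ (fun i _ => (hgcont i).max continuous_const))
  have hφnn : ∀ d, 0 ≤ φ d := by
    intro d
    rw [hφdef]
    exact add_nonneg (abs_nonneg _) (Finset.sum_nonneg (fun i _ => le_max_right _ _))
  have hφ0 : ∀ d, φ d = 0 → d = 0 := by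
    intro d hd
    rw [hφdef] at hd
    have hd' : |dotb d| + ∑ i, max (g d i) 0 = 0 := hd
    have hsumnn : 0 ≤ ∑ i, max (g d i) 0 := Finset.sum_nonneg (fun i _ => le_max_right _ _)
    have habs : |dotb d| = 0 := by
      have := abs_nonneg (dotb d); linarith
    have hsum0 : ∑ i, max (g d i) 0 = 0 := by linarith [abs_nonneg (dotb d)]
    clear hd
    have hgle : ∀ i, g d i ≤ 0 := by
      intro i
      have := (Finset.sum_eq_zero_iff_of_nonneg
        (fun i' (_ : i' ∈ Finset.univ) => le_max_right (g d i') 0)).mp hsum0 i (Finset.mem_univ i)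
      calc g d i ≤ max (g d i) 0 := le_max_left _ _
        _ = 0 := this
    have hdb0 : dotb d = 0 := abs_eq_zero.mp habs
    have hg0 : ∀ i, g d i = 0 := by
      intro i
      have hterms : ∀ i' ∈ Finset.univ, δ₁ i' * g d i' ≤ 0 :=
        fun i' _ => mul_nonpos_of_nonneg_of_nonpos (hδ₁ i').le (hgle i')
      have hsz : ∑ i', δ₁ i' * g d i' = 0 := by rw [← hswap d, hdb0]
      have := (Finset.sum_eq_zero_iff_of_nonpos hterms).mp hsz i (Finset.mem_univ i)
      rcases mul_eq_zero.mp this with h' | h'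
      · exact absurd h' (hδ₁ i).ne'
      · exact h'
    apply hinj
    funext i
    rw [hgT]
    exact hg0 i
  -- positive minimum of φ on the unit sphere
  haveI : Nonempty (Fin J) := ⟨⟨0, hJ⟩⟩
  have hsph : IsCompact (Metric.sphere (0 : Fin J → ℝ) 1) := isCompact_sphere _ _
  have hsphne : (Metric.sphere (0 : Fin J → ℝ) 1).Nonempty :=
    NormedSpace.sphere_nonempty.mpr zero_le_one
  obtain ⟨dmin, hdmin_mem, hdmin⟩ := hsph.exists_isMinOn hsphne hφcont.continuousOn
  set ε : ℝ := φ dmin with hεdef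
  have hε : 0 < ε := by
    rcases lt_or_eq_of_le (hφnn dmin) with h' | h'
    · exact h'
    · exfalso
      have hd0 : dmin = 0 := hφ0 dmin h'.symm
      rw [mem_sphere_iff_norm] at hdmin_mem
      rw [hd0] at hdmin_mem
      simp at hdmin_mem
  -- homogeneity of φ
  have hφh : ∀ (r : ℝ) (d : Fin J → ℝ), 0 ≤ r → φ (r • d) = r * φ d := by
    intro r d hr
    rw [hφdef]
    simp only []
    rw [hdsmul, abs_mul, abs_of_nonneg hr]
    rw [show (∑ i, max (g (r • d) i) 0) = ∑ i, r * max (g d i) 0 from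
      Finset.sum_congr rfl (fun i _ => by
        rw [hgsmul, mul_max_of_nonneg _ _ hr, mul_zero])]
    rw [← Finset.mul_sum]
    ring
  -- bound on the level slice set
  set Cb : ℝ := |ustar| + ∑ i, |Real.log (2 / δ₂ i)| with hCbdef
  have hkey_bound : ∀ θ : Fin J → ℝ, dotb θ = ustar → f θ ≤ 2 → ‖θ‖ ≤ Cb / ε := by
    intro θ hθd hθf
    have hφθ : φ θ ≤ Cb := by
      rw [hφdef, hCbdef]
      simp only []
      rw [hθd]
      apply add_le_add_right
      apply Finset.sum_le_sum
      intro i _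
      have h1 : δ₂ i * Real.exp (g θ i) ≤ 2 := by
        refine le_trans ?_ hθf
        rw [hfdef]
        exact Finset.single_le_sum (fun i' _ => mul_nonneg (hδ₂ i').le (Real.exp_pos _).le)
          (Finset.mem_univ i)
      have h2 : Real.exp (g θ i) ≤ 2 / δ₂ i := by
        rw [le_div_iff₀ (hδ₂ i)]
        linarith [h1]
      have h3 : g θ i ≤ Real.log (2 / δ₂ i) := by
        have := Real.log_le_log (Real.exp_pos _) h2
        rwa [Real.log_exp] at this
      exact max_le (h3.trans (le_abs_self _)) (abs_nonneg _)
    by_cases hθ0 : θ = 0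
    · rw [hθ0]
      simp only [norm_zero]
      apply div_nonneg _ hε.le
      rw [hCbdef]
      exact add_nonneg (abs_nonneg _) (Finset.sum_nonneg (fun i _ => abs_nonneg _))
    · have hnθ : 0 < ‖θ‖ := norm_pos_iff.mpr hθ0
      have hdm : (‖θ‖⁻¹ • θ) ∈ Metric.sphere (0 : Fin J → ℝ) 1 := by
        rw [mem_sphere_iff_norm, sub_zero, norm_smul, norm_inv, norm_norm,
          inv_mul_cancel₀ hnθ.ne']
      have h4 : ε ≤ φ (‖θ‖⁻¹ • θ) := hdmin hdm
      rw [hφh _ _ (inv_nonneg.mpr hnθ.le)] at h4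
      have h5 : ε * ‖θ‖ ≤ φ θ := by
        have h6 := mul_le_mul_of_nonneg_right h4 hnθ.le
        rwa [mul_comm (‖θ‖⁻¹) (φ θ), mul_assoc, inv_mul_cancel₀ hnθ.ne', mul_one] at h6
      rw [le_div_iff₀ hε]
      nlinarith [hφθ]
  -- the compact level set and the minimizer
  set S : Set (Fin J → ℝ) := {θ | dotb θ = ustar} ∩ {θ | f θ ≤ 2} with hSdef
  have hSclosed : IsClosed S :=
    (isClosed_eq hdcont continuous_const).inter (isClosed_le hfcont continuous_const)
  have hSsub : S ⊆ Metric.closedBall 0 (Cb / ε) := by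
    rintro θ ⟨hθ1, hθ2⟩
    rw [Metric.mem_closedBall, dist_zero_right]
    exact hkey_bound θ hθ1 hθ2
  have hSbdd : Bornology.IsBounded S := (Metric.isBounded_closedBall).subset hSsub
  have hScompact : IsCompact S := Metric.isCompact_of_isClosed_isBounded hSclosed hSbdd
  have hSne : S.Nonempty := by
    have hlt : h ustar < 2 := by
      rw [hustar]; norm_num
    obtain ⟨y, ⟨θ', hθ'mem, rfl⟩, hy⟩ := exists_lt_of_csInf_lt (hne ustar) hlt
    exact ⟨θ', ⟨hθ'mem, hy.le⟩⟩
  obtain ⟨θs, hθsS, hθsmin⟩ := hScompact.exists_isMinOn hSne hfcont.continuousOn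
  have hθsSl : θs ∈ Sl ustar := hθsS.1
  have hθsd : dotb θs = ustar := hθsS.1
  -- f θs = 1
  have hge : 1 ≤ f θs := by
    have h9 : h ustar ≤ f θs := csInf_le (hbdd ustar) ⟨θs, hθsSl, rfl⟩
    rw [hustar] at h9
    exact h9
  have hle : f θs ≤ 1 := by
    by_contra hgt
    push_neg at hgt
    have hlt : h ustar < f θs := by
      rw [hustar]; exact hgt
    obtain ⟨y, ⟨θ', hθ'mem, rfl⟩, hy⟩ := exists_lt_of_csInf_lt (hne ustar) hlt
    have h8 : f θs ≤ 2 := hθsS.2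
    have hθ'S : θ' ∈ S := ⟨hθ'mem, show f θ' ≤ 2 by linarith⟩
    have h7 : f θs ≤ f θ' := hθsmin hθ'S
    linarith
  have hfθs : f θs = 1 := le_antisymm hle hge
  -- global minimality on the whole slice
  have hminslice : ∀ θ', dotb θ' = ustar → f θs ≤ f θ' := by
    intro θ' hθ'
    have h9 : h ustar ≤ f θ' := csInf_le (hbdd ustar) ⟨θ', hθ', rfl⟩
    rw [hustar] at h9
    linarith
  -- stationarity along directions in the slice
  set δ : Fin n → ℝ := fun i => δ₂ i * Real.exp (g θs i) with hδdef
  have hstat : ∀ d : Fin J → ℝ, dotb d = 0 → ∑ i, δ i * g d i = 0 := by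
    intro d hd
    set q : ℝ → ℝ := fun s => ∑ i, δ₂ i * Real.exp (g θs i + s * g d i) with hqdef
    have hq : ∀ s, q s = f (θs + s • d) := by
      intro s
      rw [hqdef, hfdef]
      exact Finset.sum_congr rfl (fun i _ => by rw [hglin])
    have hmin0 : ∀ s, q 0 ≤ q s := by
      intro s
      rw [hq, hq]
      have h0 : θs + (0:ℝ) • d = θs := by simp
      rw [h0]
      apply hminslice
      rw [hdlin, hθsd, hd, mul_zero, add_zero]
    have hderiv : HasDerivAt q (∑ i, δ i * g d i) 0 := by
      rw [hqdef]
      apply HasDerivAt.fun_sum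
      intro i _
      have h1 : HasDerivAt (fun s : ℝ => g θs i + s * g d i) (g d i) 0 := by
        simpa using ((hasDerivAt_id (0:ℝ)).mul_const (g d i)).const_add (g θs i)
      have h3 := (h1.exp).const_mul (δ₂ i)
      simp only [zero_mul, add_zero] at h3
      refine h3.congr_deriv ?_
      rw [hδdef]
      ring
    have hloc : IsLocalMin q 0 := Filter.Eventually.of_forall hmin0
    exact hloc.hasDerivAt_eq_zero hderiv
  -- assemble the conclusion
  set Ad : Fin J → ℝ := fun j => ∑ i, A j i * δ i with hAddef
  have hswap2 : ∀ d : Fin J → ℝ, ∑ i, δ i * g d i = ∑ j, Ad j * d j := by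
    intro d
    simp only [hgdef, hAddef, Finset.mul_sum, Finset.sum_mul]
    rw [Finset.sum_comm]
    exact Finset.sum_congr rfl (fun j _ => Finset.sum_congr rfl (fun i _ => by ring))
  set α : ℝ := (∑ j, Ad j * b j) / B with hαdef
  set w : Fin J → ℝ := fun j => Ad j - α * b j with hwdef
  have hwb : ∑ j, w j * b j = 0 := by
    simp only [hwdef, sub_mul, Finset.sum_sub_distrib]
    rw [show ∑ j, α * b j * b j = α * ∑ j, b j * b j from by
      rw [Finset.mul_sum]; exact Finset.sum_congr rfl (fun j _ => by ring)]
    rw [← hBdef, hαdef, div_mul_cancel₀ _ hB.ne']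
    ring
  have hdw : dotb w = 0 := by
    rw [hdotdef]
    show ∑ j, b j * w j = 0
    rw [show ∑ j, b j * w j = ∑ j, w j * b j from
      Finset.sum_congr rfl (fun j _ => mul_comm _ _)]
    exact hwb
  have hAdw : ∑ j, Ad j * w j = 0 := by
    rw [← hswap2 w]
    exact hstat w hdw
  have hww : ∑ j, w j * w j = 0 := by
    have hexp : ∑ j, w j * w j = (∑ j, Ad j * w j) - α * ∑ j, w j * b j := by
      rw [Finset.mul_sum, ← Finset.sum_sub_distrib]
      exact Finset.sum_congr rfl (fun j _ => by simp only [hwdef]; ring)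
    rw [hexp, hAdw, hwb]
    ring
  have hwzero : ∀ j, w j = 0 := by
    intro j
    have hnn : ∀ j' ∈ Finset.univ, (0:ℝ) ≤ w j' * w j' := fun j' _ => mul_self_nonneg _
    have := (Finset.sum_eq_zero_iff_of_nonneg hnn).mp hww j (Finset.mem_univ j)
    exact mul_self_eq_zero.mp this
  -- final packaging
  refine ⟨θs, α, ?_, ?_⟩
  · exact hfθs
  · have hδeq : (fun i => δ₂ i * Real.exp (∑ j, A j i * θs j)) = δ := rfl
    rw [hδeq]
    have hAd : A.mulVec δ = Ad := by
      funext j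
      simp [Matrix.mulVec, dotProduct, hAddef]
    have hbmul : A.mulVec δ₁ = b := by
      funext j
      simp [Matrix.mulVec, dotProduct, hbdef]
    rw [hAd, hbmul]
    funext j
    have h9 : Ad j - α * b j = 0 := hwzero j
    simp only [Pi.smul_apply, smul_eq_mul]
    linarith [h9]

/-- Let `A` be a `J × n` matrix with nonnegative integer entries and full row
rank `J`, and `D` a kernel basis matrix of `A`.  For any strictly positive probability
vectors `δ₁, δ₂` there are a strictly positive probability vector `δ` and a scalar `α` with
`A δ = α (A δ₁)` and `D log δ = D log δ₂`; moreover if the all-ones vector lies in the row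
space of `A` then necessarily `α = 1`. -/
theorem stmt11
    (J n : ℕ) (hJn : J < n)
    (A : Matrix (Fin J) (Fin n) ℝ)
    (hnat : ∀ j i, ∃ m : ℕ, A j i = (m : ℝ))
    (hrank : A.rank = J)
    (D : Matrix (Fin (n - J)) (Fin n) ℝ)
    (hDindep : LinearIndependent ℝ (fun l => D l))
    (hDspan : Submodule.span ℝ (Set.range (fun l => D l)) = LinearMap.ker A.mulVecLin)
    (δ₁ δ₂ : Fin n → ℝ)
    (hδ₁ : ∀ i, 0 < δ₁ i) (hδ₁sum : ∑ i, δ₁ i = 1)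
    (hδ₂ : ∀ i, 0 < δ₂ i) (hδ₂sum : ∑ i, δ₂ i = 1) :
    (∃ (δ : Fin n → ℝ) (α : ℝ), (∀ i, 0 < δ i) ∧ (∑ i, δ i = 1) ∧
        A.mulVec δ = α • A.mulVec δ₁ ∧
        D.mulVec (fun i => Real.log (δ i)) = D.mulVec (fun i => Real.log (δ₂ i))) ∧
    ((∃ k : Fin J → ℝ, (fun _ => (1 : ℝ)) = A.transpose.mulVec k) →
      ∀ (δ : Fin n → ℝ) (α : ℝ), (∀ i, 0 < δ i) → (∑ i, δ i = 1) →
        A.mulVec δ = α • A.mulVec δ₁ →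
        D.mulVec (fun i => Real.log (δ i)) = D.mulVec (fun i => Real.log (δ₂ i)) →
        α = 1) := by
  constructor
  · rcases Nat.eq_zero_or_pos J with hJ0 | hJpos
    · subst hJ0
      refine ⟨δ₂, 0, hδ₂, hδ₂sum, ?_, rfl⟩
      funext j
      exact Fin.elim0 j
    · have hA0 : ∀ j i, 0 ≤ A j i := fun j i => by
        obtain ⟨m, hm⟩ := hnat j i
        rw [hm]
        positivity
      have hinj := inj_of_rank J n A hrank
      obtain ⟨θ, α, hsum, hAeq⟩ := exists_theta J n hJpos A hA0 hinj δ₁ δ₂ hδ₁ hδ₁sum hδ₂ hδ₂sum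
      refine ⟨fun i => δ₂ i * Real.exp (∑ j, A j i * θ j), α, ?_, hsum, hAeq, ?_⟩
      · intro i
        exact mul_pos (hδ₂ i) (Real.exp_pos _)
      · funext l
        have hker : A.mulVec (D l) = 0 := by
          have hmem : D l ∈ Submodule.span ℝ (Set.range fun l => D l) :=
            Submodule.subset_span (Set.mem_range_self l)
          rw [hDspan] at hmem
          have := LinearMap.mem_ker.mp hmem
          rwa [Matrix.mulVecLin_apply] at this
        have hlog : ∀ i, Real.log (δ₂ i * Real.exp (∑ j, A j i * θ j))
            = Real.log (δ₂ i) + ∑ j, A j i * θ j := by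
          intro i
          rw [Real.log_mul (hδ₂ i).ne' (Real.exp_pos _).ne', Real.log_exp]
        simp only [Matrix.mulVec, dotProduct]
        rw [show (∑ i, D l i * Real.log (δ₂ i * Real.exp (∑ j, A j i * θ j)))
            = (∑ i, D l i * Real.log (δ₂ i)) + ∑ i, D l i * ∑ j, A j i * θ j from by
          rw [← Finset.sum_add_distrib]
          exact Finset.sum_congr rfl fun i _ => by rw [hlog i]; ring]
        have hzero : ∑ i, D l i * ∑ j, A j i * θ j = 0 := by
          have hsw : ∑ i, D l i * ∑ j, A j i * θ j = ∑ j, (∑ i, A j i * D l i) * θ j := by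
            simp only [Finset.mul_sum, Finset.sum_mul]
            rw [Finset.sum_comm]
            exact Finset.sum_congr rfl fun j _ => Finset.sum_congr rfl fun i _ => by ring
          rw [hsw]
          have hz : ∀ j, (∑ i, A j i * D l i) = 0 := by
            intro j
            have := congrFun hker j
            simpa [Matrix.mulVec, dotProduct] using this
          exact Finset.sum_eq_zero fun j _ => by rw [hz j, zero_mul]
        rw [hzero, add_zero]
  · rintro ⟨k, hk⟩ δ α hpos hsum hAeq hD
    have key : ∀ ρ : Fin n → ℝ, ∑ i, ρ i = ∑ j, k j * (A.mulVec ρ) j := by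
      intro ρ
      have h1 : ∀ i, (1:ℝ) = A.transpose.mulVec k i := fun i => congrFun hk i
      calc ∑ i, ρ i = ∑ i, (A.transpose.mulVec k i) * ρ i :=
            Finset.sum_congr rfl fun i _ => by rw [← h1 i, one_mul]
        _ = ∑ i, (∑ j, A j i * k j) * ρ i :=
            Finset.sum_congr rfl fun i _ => by
              simp [Matrix.mulVec, dotProduct, Matrix.transpose_apply]
        _ = ∑ j, k j * (∑ i, A j i * ρ i) := by
            simp only [Finset.sum_mul, Finset.mul_sum]
            rw [Finset.sum_comm]
            exact Finset.sum_congr rfl fun j _ => Finset.sum_congr rfl fun i _ => by ring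
        _ = ∑ j, k j * (A.mulVec ρ) j :=
            Finset.sum_congr rfl fun j _ => by
              simp [Matrix.mulVec, dotProduct]
    have h2 : (1:ℝ) = ∑ j, k j * (A.mulVec δ) j := by rw [← key δ, hsum]
    rw [hAeq] at h2
    have h3 : ∑ j, k j * (α • A.mulVec δ₁) j = α * ∑ j, k j * (A.mulVec δ₁) j := by
      rw [Finset.mul_sum]
      exact Finset.sum_congr rfl fun j _ => by simp [Pi.smul_apply]; ring
    rw [h3, ← key δ₁, hδ₁sum, mul_one] at h2
    exact h2.symm
end
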